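/- Let f, φ, μ, s ∈ ℝ with 0 < f < 1, 0 < φ ≤ 1, μ ≥ 1, s ≥ 0, and let n ≥ 1 be a natural number. Define σ_X² = f·(μ²·(φ − f) + μ·(1 − φ) + s·φ) and σ_Y² = f·(1 − f), and assume σ_X² ≥ 0. If s ≤ μ·(μ − 1)·(1 − φ)/φ, then for every λ > 0: N(μ·f, σ_X²/n)({x ∈ ℝ : |x/μ − f| > λ}) ≤ N(f, σ_Y²/n)({y ∈ ℝ : |y − f| > λ}). -/

import Mathlib

open ProbabilityTheory
open scoped NNReal

private lemma abs_gt_measurableSet (m lam : ℝ) :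
    MeasurableSet {y : ℝ | |y - m| > lam} :=
  (isOpen_lt continuous_const ((continuous_id.sub continuous_const).abs)).measurableSet

/-- Gaussian two-sided tail probability is monotone in the variance. -/
private lemma gauss_tail_mono (m lam : ℝ) (hlam : 0 < lam) (v w : ℝ≥0) (hvw : v ≤ w) :
    gaussianReal m v {y : ℝ | |y - m| > lam} ≤ gaussianReal m w {y : ℝ | |y - m| > lam} := by
  have hS0 : MeasurableSet {z : ℝ | |z| > lam} :=
    (isOpen_lt continuous_const continuous_abs).measurableSet
  -- centering
  have hc : ∀ u : ℝ≥0, gaussianReal m u {y : ℝ | |y - m| > lam}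
      = gaussianReal 0 u {z : ℝ | |z| > lam} := by
    intro u
    have hmap := gaussianReal_map_add_const (μ := m) (v := u) (-m)
    rw [add_neg_cancel] at hmap
    rw [← hmap, MeasureTheory.Measure.map_apply (by fun_prop) hS0]
    congr 1
  rw [hc v, hc w]
  by_cases hv : v = 0
  · rw [hv, gaussianReal_zero_var, MeasureTheory.Measure.dirac_apply' _ hS0]
    have h0 : (0 : ℝ) ∉ {z : ℝ | |z| > lam} := by simp [hlam.le, not_lt]
    simp [Set.indicator_of_notMem h0]
  have hw : w ≠ 0 := fun h => hv (le_antisymm (h ▸ hvw) zero_le)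
  -- standardization
  have hstd : ∀ u : ℝ≥0, u ≠ 0 → gaussianReal 0 u {z : ℝ | |z| > lam}
      = gaussianReal 0 1 {x : ℝ | |x| > lam / Real.sqrt u} := by
    intro u hu
    have hupos : (0 : ℝ) < u := by
      exact_mod_cast (pos_iff_ne_zero.mpr hu : 0 < u)
    have hsq : 0 < Real.sqrt u := Real.sqrt_pos.mpr hupos
    have h1 : (NNReal.mk ((Real.sqrt u) ^ 2) (sq_nonneg _)) * 1 = u := by
      ext
      simp [Real.sq_sqrt u.coe_nonneg]
    have hmap := gaussianReal_map_const_mul (μ := 0) (v := 1) (Real.sqrt u)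
    rw [mul_zero, h1] at hmap
    rw [← hmap, MeasureTheory.Measure.map_apply (measurable_const_mul _) hS0]
    congr 1
    ext x
    simp only [Set.mem_preimage, Set.mem_setOf_eq, abs_mul, abs_of_pos hsq, gt_iff_lt]
    rw [div_lt_iff₀ hsq, mul_comm]
  rw [hstd v hv, hstd w hw]
  apply MeasureTheory.measure_mono
  intro x hx
  have hvpos : (0 : ℝ) < v := by
    exact_mod_cast (pos_iff_ne_zero.mpr hv : 0 < v)
  have hle : lam / Real.sqrt w ≤ lam / Real.sqrt v :=
    div_le_div_of_nonneg_left hlam.le (Real.sqrt_pos.mpr hvpos)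
      (Real.sqrt_le_sqrt (by exact_mod_cast hvw))
  exact lt_of_le_of_lt hle hx

/-- Paper Theorem 2: within the bound on degree variance, the (Gaussian
approximation of the) indirect-survey estimate deviates from `f` with lower
probability than the direct-survey estimate. -/
theorem indirect_better_than_direct (f φ μ s : ℝ)
    (hf0 : 0 < f) (hf1 : f < 1) (hφ0 : 0 < φ) (hφ1 : φ ≤ 1)
    (hμ : 1 ≤ μ) (hs : 0 ≤ s) (n : ℕ) (hn : 1 ≤ n)
    (σX2 σY2 : ℝ)
    (hσX : σX2 = f * (μ ^ 2 * (φ - f) + μ * (1 - φ) + s * φ))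
    (hσY : σY2 = f * (1 - f))
    (hσX0 : 0 ≤ σX2)
    (hcond : s ≤ μ * (μ - 1) * (1 - φ) / φ) :
    ∀ lam : ℝ, 0 < lam →
      gaussianReal (μ * f) ((σX2 / n).toNNReal) {x : ℝ | |x / μ - f| > lam} ≤
      gaussianReal f ((σY2 / n).toNNReal) {y : ℝ | |y - f| > lam} := by
  intro lam hlam
  have hμ0 : (0 : ℝ) < μ := lt_of_lt_of_le one_pos hμ
  have hn0 : (0 : ℝ) < n := by exact_mod_cast hn
  have hS : MeasurableSet {y : ℝ | |y - f| > lam} := abs_gt_measurableSet f lam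
  -- rescale the first Gaussian
  have hmap := gaussianReal_map_const_mul (μ := μ * f) (v := (σX2 / n).toNNReal) μ⁻¹
  rw [inv_mul_cancel_left₀ hμ0.ne'] at hmap
  have hset : {x : ℝ | |x / μ - f| > lam} = (fun x => μ⁻¹ * x) ⁻¹' {y : ℝ | |y - f| > lam} := by
    ext x
    simp [div_eq_inv_mul]
  rw [hset, ← MeasureTheory.Measure.map_apply (measurable_const_mul _) hS, hmap]
  apply gauss_tail_mono f lam hlam
  -- variance comparison
  have hXn : 0 ≤ σX2 / n := div_nonneg hσX0 hn0.le
  have hYn : 0 ≤ σY2 / n := by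
    apply div_nonneg _ hn0.le
    rw [hσY]
    exact mul_nonneg hf0.le (by linarith)
  rw [← NNReal.coe_le_coe, NNReal.coe_mul, NNReal.coe_mk,
    Real.coe_toNNReal _ hXn, Real.coe_toNNReal _ hYn]
  have hsφ : s * φ ≤ μ * (μ - 1) * (1 - φ) := by
    rw [div_eq_mul_inv] at hcond
    calc s * φ ≤ (μ * (μ - 1) * (1 - φ) * φ⁻¹) * φ :=
          mul_le_mul_of_nonneg_right hcond hφ0.le
      _ = μ * (μ - 1) * (1 - φ) := by field_simp
  have hkey : σX2 ≤ μ ^ 2 * σY2 := by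
    rw [hσX, hσY]
    nlinarith [mul_le_mul_of_nonneg_left hsφ hf0.le]
  have h1 : μ⁻¹ ^ 2 * σX2 ≤ σY2 := by
    rw [inv_pow, inv_mul_le_iff₀ (pow_pos hμ0 2)]
    exact hkey
  calc μ⁻¹ ^ 2 * (σX2 / n) = (μ⁻¹ ^ 2 * σX2) / n := by ring
    _ ≤ σY2 / n := by
        apply div_le_div_of_nonneg_right h1 hn0.le
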